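/- If V is a variety of Heyting algebras generated by a finite totally ordered Heyting algebra with n elements where n > 3, then V does not have the amalgamation property: the totally ordered algebras B = {⊥ < b < a₁ < ⋯ < a_{n-3} < ⊤} and C = {⊥ < a₁ < ⋯ < a_{n-3} < c < ⊤}, with common subalgebra A = {⊥ < a₁ < ⋯ < a_{n-3} < ⊤}, have no amalgam in V, since an amalgam would contain an (n+1)-element totally ordered Heyting subalgebra, contradicting the fact that V satisfies ⊤ ≈ x₁ ∨ (x₁ → x₂) ∨ (x₂ → x₃) ∨ ⋯ ∨ (x_{n-1} → x_n). -/

import Mathlib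

/-- Heyting formulas over countably many variables. -/
inductive HTerm : Type
  | var : ℕ → HTerm
  | bot : HTerm
  | top : HTerm
  | meet : HTerm → HTerm → HTerm
  | join : HTerm → HTerm → HTerm
  | himp : HTerm → HTerm → HTerm

/-- Evaluation of a Heyting formula in a Heyting algebra under a valuation. -/
def heval {H : Type*} [HeytingAlgebra H] (v : ℕ → H) : HTerm → H
  | .var n => v n
  | .bot => ⊥
  | .top => ⊤
  | .meet s t => heval v s ⊓ heval v t
  | .join s t => heval v s ⊔ heval v t
  | .himp s t => heval v s ⇨ heval v t

/-- Membership in the variety generated by the Heyting algebra `H`: a Heyting algebra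
belongs to it iff it satisfies every equation satisfied by `H`. -/
def InVarietyOf (H : Type) [HeytingAlgebra H] (K : HeytAlg) : Prop :=
  ∀ s t : HTerm, (∀ v : ℕ → H, heval v s = heval v t) → ∀ w : ℕ → ↥K, heval w s = heval w t

namespace ChainAP

instance uliftBoundedOrder {α : Type*} [Preorder α] [BoundedOrder α] :
    BoundedOrder (ULift.{u} α) where
  top := ULift.up ⊤
  le_top a := (le_top : a.down ≤ ⊤)
  bot := ULift.up ⊥
  bot_le a := (bot_le : ⊥ ≤ a.down)

noncomputable instance finChain (k : ℕ) : HeytingAlgebra (ULift.{u} (Fin (k+1))) :=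
  (LinearOrder.toBiheytingAlgebra _).toHeytingAlgebra

/-- The `i`-th element of the `(k+1)`-chain. -/
def el (k i : ℕ) (h : i < k + 1) : ULift.{u} (Fin (k+1)) := ULift.up ⟨i, h⟩

lemma el_le_el {k i j : ℕ} {h : i < k + 1} {h' : j < k + 1} :
    el.{u} k i h ≤ el k j h' ↔ i ≤ j := Iff.rfl

lemma el_bot (k : ℕ) : (⊥ : ULift.{u} (Fin (k+1))) = el k 0 (by omega) := rfl

lemma el_top (k : ℕ) : (⊤ : ULift.{u} (Fin (k+1))) = el k k (by omega) := rfl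

lemma chain_total (k : ℕ) : ∀ a b : ULift.{u} (Fin (k+1)), a ≤ b ∨ b ≤ a :=
  fun a b => le_total a b

lemma himp_of_not_le {α : Type*} [HeytingAlgebra α]
    (htot : ∀ a b : α, a ≤ b ∨ b ≤ a) {a b : α} (h : ¬ a ≤ b) : a ⇨ b = b := by
  have key : (a ⇨ b) ⊓ a ≤ b := le_himp_iff.1 le_rfl
  apply le_antisymm
  · rcases htot a (a ⇨ b) with h1 | h1
    · exact absurd (by rwa [inf_eq_right.2 h1] at key) h
    · rwa [inf_eq_left.2 h1] at key
  · exact le_himp_iff.2 inf_le_left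

lemma hom_mono {α β : Type*} [HeytingAlgebra α] [HeytingAlgebra β]
    (f : HeytingHom α β) {a b : α} (h : a ≤ b) : f a ≤ f b :=
  sup_eq_right.1 (by rw [← map_sup, sup_eq_right.2 h])

/-- Construct a Heyting hom between totally ordered Heyting algebras from a strictly
monotone map preserving `⊥` and `⊤`. -/
def mkHom {α β : Type*} [HeytingAlgebra α] [HeytingAlgebra β]
    (hα : ∀ a b : α, a ≤ b ∨ b ≤ a) (hβ : ∀ a b : β, a ≤ b ∨ b ≤ a)
    (f : α → β) (hmono : ∀ a b : α, a ≤ b ↔ f a ≤ f b)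
    (hbot : f ⊥ = ⊥) (htop : f ⊤ = ⊤) : HeytingHom α β where
  toFun := f
  map_sup' a b := by
    show f (a ⊔ b) = f a ⊔ f b
    rcases hα a b with h | h
    · rw [sup_eq_right.2 h, sup_eq_right.2 ((hmono a b).1 h)]
    · rw [sup_eq_left.2 h, sup_eq_left.2 ((hmono b a).1 h)]
  map_inf' a b := by
    show f (a ⊓ b) = f a ⊓ f b
    rcases hα a b with h | h
    · rw [inf_eq_left.2 h, inf_eq_left.2 ((hmono a b).1 h)]
    · rw [inf_eq_right.2 h, inf_eq_right.2 ((hmono b a).1 h)]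
  map_bot' := hbot
  map_himp' a b := by
    show f (a ⇨ b) = f a ⇨ f b
    by_cases h : a ≤ b
    · rw [himp_eq_top_iff.2 h, himp_eq_top_iff.2 ((hmono a b).1 h), htop]
    · rw [himp_of_not_le hα h, himp_of_not_le hβ (fun hh => h ((hmono a b).2 hh))]

lemma mkHom_injective {α β : Type*} [HeytingAlgebra α] [HeytingAlgebra β]
    (hα : ∀ a b : α, a ≤ b ∨ b ≤ a) (hβ : ∀ a b : β, a ≤ b ∨ b ≤ a)
    (f : α → β) (hmono : ∀ a b : α, a ≤ b ↔ f a ≤ f b)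
    (hbot : f ⊥ = ⊥) (htop : f ⊤ = ⊤) :
    Function.Injective (mkHom hα hβ f hmono hbot htop) := fun a b hab =>
  le_antisymm ((hmono a b).2 (le_of_eq hab)) ((hmono b a).2 (le_of_eq hab.symm))

lemma heval_hom {α β : Type*} [HeytingAlgebra α] [HeytingAlgebra β]
    (f : HeytingHom α β) (v : ℕ → α) :
    ∀ t : HTerm, f (heval v t) = heval (fun n => f (v n)) t
  | .var n => rfl
  | .bot => map_bot f
  | .top => map_top f
  | .meet s t => by
      simp only [heval, map_inf, heval_hom f v s, heval_hom f v t]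
  | .join s t => by
      simp only [heval, map_sup, heval_hom f v s, heval_hom f v t]
  | .himp s t => by
      simp only [heval, map_himp, heval_hom f v s, heval_hom f v t]

lemma inVariety_of_embedding {H : Type} {K : Type u} [HeytingAlgebra H] [HeytingAlgebra K]
    (f : HeytingHom K H) (hf : Function.Injective f) :
    InVarietyOf H (HeytAlg.of K) := by
  intro s t h w
  apply hf
  rw [heval_hom, heval_hom]
  exact h _

/-- The term `x₀ ∨ (x₀ ⇨ x₁) ∨ ⋯ ∨ (x_{k-1} ⇨ x_k)`. -/
def chainTerm : ℕ → HTerm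
  | 0 => .var 0
  | k+1 => .join (chainTerm k) (.himp (.var k) (.var (k+1)))

lemma heval_chainTerm_eq {D : Type*} [HeytingAlgebra D] (v : ℕ → D) (k : ℕ)
    (h : ∀ i < k, v i ⇨ v (i+1) ≤ v 0) : heval v (chainTerm k) = v 0 := by
  induction k with
  | zero => rfl
  | succ k ih =>
    show heval v (chainTerm k) ⊔ (v k ⇨ v (k+1)) = v 0
    rw [ih (fun i hi => h i (by omega)), sup_eq_left.2 (h k (by omega))]

lemma chainTerm_ne_top {α : Type*} [HeytingAlgebra α]
    (htot : ∀ a b : α, a ≤ b ∨ b ≤ a) (v : ℕ → α) (k : ℕ)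
    (h : heval v (chainTerm k) ≠ ⊤) : v 0 ≠ ⊤ ∧ ∀ i < k, v (i+1) < v i := by
  induction k with
  | zero => exact ⟨h, by omega⟩
  | succ k ih =>
    have hsplit : heval v (chainTerm (k+1)) = heval v (chainTerm k) ⊔ (v k ⇨ v (k+1)) := rfl
    have h1 : heval v (chainTerm k) ≠ ⊤ := by
      intro e; apply h; rw [hsplit, e, top_sup_eq]
    have h2 : v k ⇨ v (k+1) ≠ ⊤ := by
      intro e; apply h; rw [hsplit, e, sup_top_eq]
    have h3 : ¬ v k ≤ v (k+1) := fun hle => h2 (himp_eq_top_iff.2 hle)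
    obtain ⟨h0, hdec⟩ := ih h1
    refine ⟨h0, fun i hi => ?_⟩
    rcases Nat.lt_succ_iff_lt_or_eq.1 hi with hi' | rfl
    · exact hdec i hi'
    · rcases htot (v i) (v (i+1)) with hle | hle
      · exact absurd hle h3
      · exact lt_of_le_not_ge hle h3

lemma identity_in_total {α : Type*} [HeytingAlgebra α] [Fintype α]
    (htot : ∀ a b : α, a ≤ b ∨ b ≤ a) (k : ℕ)
    (hcard : Fintype.card α ≤ k + 1) (v : ℕ → α) : heval v (chainTerm k) = ⊤ := by
  by_contra h
  obtain ⟨h0, hdec⟩ := chainTerm_ne_top htot v k h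
  set w : ℕ → α := fun i => if i = 0 then ⊤ else v (i - 1) with hw
  have hstep : ∀ i < k + 1, w (i+1) < w i := by
    intro i hi
    cases i with
    | zero => simpa [hw] using Ne.lt_top h0
    | succ j => simpa [hw] using hdec j (by omega)
  have hlt : ∀ j, j ≤ k + 1 → ∀ i < j, w j < w i := by
    intro j
    induction j with
    | zero => omega
    | succ j ih =>
      intro hj i hij
      rcases Nat.lt_succ_iff_lt_or_eq.1 hij with hij' | rfl
      · exact (hstep j (by omega)).trans (ih (by omega) i hij')
      · exact hstep i (by omega)
  have hinj : Function.Injective (fun i : Fin (k + 2) => w i.val) := by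
    intro i j hij
    by_contra hne
    rcases lt_or_gt_of_ne (fun e : i.val = j.val => hne (Fin.ext e)) with hij' | hij'
    · exact absurd hij (ne_of_gt (by simpa using hlt j.val (by omega) i.val hij'))
    · exact absurd hij (ne_of_lt (by simpa using hlt i.val (by omega) j.val hij'))
  have := Fintype.card_le_of_injective _ hinj
  simp only [Fintype.card_fin] at this
  omega

/-- Universe-polymorphic version of the main theorem. -/
theorem main.{u1, u2, u3, u4}
    (H : Type) [HeytingAlgebra H] [Fintype H]
    (hlin : ∀ a b : H, a ≤ b ∨ b ≤ a) (hcard : 3 < Fintype.card H) :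
    ¬ (∀ (A : HeytAlg.{u1}) (B : HeytAlg.{u2}) (C : HeytAlg.{u3}),
        InVarietyOf H A → InVarietyOf H B → InVarietyOf H C →
        ∀ (φB : HeytingHom ↥A ↥B) (φC : HeytingHom ↥A ↥C),
          Function.Injective φB → Function.Injective φC →
          ∃ D : HeytAlg.{u4}, InVarietyOf H D ∧
            ∃ (ψB : HeytingHom ↥B ↥D) (ψC : HeytingHom ↥C ↥D),
              Function.Injective ψB ∧ Function.Injective ψC ∧
              ∀ a : ↥A, ψB (φB a) = ψC (φC a)) := by
  intro hAP
  classical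
  obtain ⟨m, hm⟩ : ∃ m, Fintype.card H = m + 4 := ⟨Fintype.card H - 4, by omega⟩
  -- linear order on H
  letI : DecidableRel ((· ≤ ·) : H → H → Prop) := Classical.decRel _
  letI : DecidableRel ((· < ·) : H → H → Prop) := Classical.decRel _
  haveI : IsTotal H (· ≤ ·) := ⟨hlin⟩
  letI : LinearOrder H := Lattice.toLinearOrder H
  have e : Fin (m+4) ≃o H := Fintype.orderIsoFinOfCardEq H hm
  have htotB := chain_total.{u2} (m+3)
  have htotC := chain_total.{u3} (m+3)
  have htotA := chain_total.{u1} (m+2)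
  -- embedding of the (m+4)-chain into H
  let g : ULift.{u2} (Fin (m+4)) → H := fun i => e i.down
  have gmono : ∀ a b : ULift.{u2} (Fin (m+4)), a ≤ b ↔ g a ≤ g b :=
    fun a b => ⟨fun h => e.le_iff_le.2 h, fun h => e.le_iff_le.1 h⟩
  have gbot : g ⊥ = ⊥ := e.map_bot
  have gtop : g ⊤ = ⊤ := e.map_top
  let gH : HeytingHom (ULift.{u2} (Fin (m+4))) H := mkHom htotB hlin g gmono gbot gtop
  have gH_inj : Function.Injective gH := mkHom_injective htotB hlin g gmono gbot gtop
  -- likewise for universe u3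
  let g' : ULift.{u3} (Fin (m+4)) → H := fun i => e i.down
  have g'mono : ∀ a b : ULift.{u3} (Fin (m+4)), a ≤ b ↔ g' a ≤ g' b :=
    fun a b => ⟨fun h => e.le_iff_le.2 h, fun h => e.le_iff_le.1 h⟩
  have g'bot : g' ⊥ = ⊥ := e.map_bot
  have g'top : g' ⊤ = ⊤ := e.map_top
  let gH' : HeytingHom (ULift.{u3} (Fin (m+4))) H := mkHom htotC hlin g' g'mono g'bot g'top
  have gH'_inj : Function.Injective gH' := mkHom_injective htotC hlin g' g'mono g'bot g'top
  -- the embeddings φB and φC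
  let fB : ULift.{u1} (Fin (m+3)) → ULift.{u2} (Fin (m+4)) := fun i =>
    ULift.up ⟨if i.down.val = 0 then 0 else i.down.val + 1, by have := i.down.isLt; split <;> omega⟩
  let fC : ULift.{u1} (Fin (m+3)) → ULift.{u3} (Fin (m+4)) := fun i =>
    ULift.up ⟨if i.down.val = m + 2 then m + 3 else i.down.val, by have := i.down.isLt; split <;> omega⟩
  have fBmono : ∀ a b : ULift.{u1} (Fin (m+3)), a ≤ b ↔ fB a ≤ fB b := by
    intro a b
    have ha := a.down.isLt; have hb := b.down.isLt
    show a.down.val ≤ b.down.val ↔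
      (if a.down.val = 0 then 0 else a.down.val + 1) ≤
        (if b.down.val = 0 then 0 else b.down.val + 1)
    split_ifs <;> omega
  have fCmono : ∀ a b : ULift.{u1} (Fin (m+3)), a ≤ b ↔ fC a ≤ fC b := by
    intro a b
    have ha := a.down.isLt; have hb := b.down.isLt
    show a.down.val ≤ b.down.val ↔
      (if a.down.val = m + 2 then m + 3 else a.down.val) ≤
        (if b.down.val = m + 2 then m + 3 else b.down.val)
    split_ifs <;> omega
  have fBbot : fB ⊥ = ⊥ := by
    refine congrArg ULift.up (Fin.ext ?_)
    show (if (0:ℕ) = 0 then 0 else 0 + 1) = 0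
    simp
  have fBtop : fB ⊤ = ⊤ := by
    refine congrArg ULift.up (Fin.ext ?_)
    show (if m + 2 = 0 then 0 else m + 2 + 1) = m + 3
    rw [if_neg (by omega)]
  have fCbot : fC ⊥ = ⊥ := by
    refine congrArg ULift.up (Fin.ext ?_)
    show (if (0:ℕ) = m + 2 then m + 3 else 0) = 0
    rw [if_neg (by omega)]
  have fCtop : fC ⊤ = ⊤ := by
    refine congrArg ULift.up (Fin.ext ?_)
    show (if m + 2 = m + 2 then m + 3 else m + 2) = m + 3
    rw [if_pos rfl]
  let φB : HeytingHom (ULift.{u1} (Fin (m+3))) (ULift.{u2} (Fin (m+4))) :=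
    mkHom htotA htotB fB fBmono fBbot fBtop
  let φC : HeytingHom (ULift.{u1} (Fin (m+3))) (ULift.{u3} (Fin (m+4))) :=
    mkHom htotA htotC fC fCmono fCbot fCtop
  have φB_inj : Function.Injective φB := mkHom_injective _ _ _ _ _ _
  have φC_inj : Function.Injective φC := mkHom_injective _ _ _ _ _ _
  -- variety membership
  have hVB : InVarietyOf H (HeytAlg.of (ULift.{u2} (Fin (m+4)))) :=
    inVariety_of_embedding gH gH_inj
  have hVC : InVarietyOf H (HeytAlg.of (ULift.{u3} (Fin (m+4)))) :=
    inVariety_of_embedding gH' gH'_inj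
  have hVA : InVarietyOf H (HeytAlg.of (ULift.{u1} (Fin (m+3)))) :=
    inVariety_of_embedding (gH.comp φB) (gH_inj.comp φB_inj)
  obtain ⟨D, hD, ψB, ψC, ψB_inj, ψC_inj, hcomm⟩ :=
    hAP (HeytAlg.of (ULift.{u1} (Fin (m+3)))) (HeytAlg.of (ULift.{u2} (Fin (m+4))))
      (HeytAlg.of (ULift.{u3} (Fin (m+4)))) hVA hVB hVC φB φC φB_inj φC_inj
  -- the valuation in D witnessing failure of the chain identity
  set v : ℕ → ↥D := fun j =>
    if hj : j ≤ m + 1 then ψC (el (m+3) (m + 2 - j) (by omega))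
    else if j = m + 2 then ψB (el (m+3) 1 (by omega)) else ⊥ with hv
  have hvC : ∀ j (hj : j ≤ m + 1), v j = ψC (el (m+3) (m + 2 - j) (by omega)) := by
    intro j hj; simp only [hv]; rw [dif_pos hj]
  have hvB : v (m + 2) = ψB (el (m+3) 1 (by omega)) := by
    have h1 : ¬ (m + 2 ≤ m + 1) := by omega
    simp [hv, h1]
  have hvbot : v (m + 3) = ⊥ := by
    have h1 : ¬ (m + 3 ≤ m + 1) := by omega
    have h2 : m + 3 ≠ m + 2 := by omega
    simp [hv, h1, h2]
  -- the bridge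
  have hbridge : ψC (el (m+3) 1 (by omega)) = ψB (el (m+3) 2 (by omega)) := by
    have h1 : φC (el (m+2) 1 (by omega)) = el (m+3) 1 (by omega) := by
      refine congrArg ULift.up (Fin.ext ?_)
      show (if (1:ℕ) = m + 2 then m + 3 else 1) = 1
      rw [if_neg (by omega)]
    have h2 : φB (el (m+2) 1 (by omega)) = el (m+3) 2 (by omega) := by
      refine congrArg ULift.up (Fin.ext ?_)
      show (if (1:ℕ) = 0 then 0 else 1 + 1) = 2
      rw [if_neg (by omega)]
    calc ψC (el (m+3) 1 (by omega)) = ψC (φC (el (m+2) 1 (by omega))) := by rw [h1]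
      _ = ψB (φB (el (m+2) 1 (by omega))) := (hcomm _).symm
      _ = ψB (el (m+3) 2 (by omega)) := by rw [h2]
  have hk : ∀ i < m + 3, v i ⇨ v (i+1) ≤ v 0 := by
    intro i hi
    rcases Nat.lt_or_ge i (m + 1) with h1 | h1
    · -- both in the image of ψC
      rw [hvC i (by omega), hvC (i+1) (by omega), ← map_himp,
        himp_of_not_le htotC (by rw [el_le_el]; omega), hvC 0 (by omega)]
      exact hom_mono ψC (el_le_el.2 (by omega))
    · rcases Nat.eq_or_lt_of_le h1 with rfl | h2
      · -- i = m + 1 : bridge step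
        have he : (m + 2 - (m + 1)) = 1 := by omega
        rw [hvC (m+1) (by omega), hvB]
        have he2 : ψC (el (m+3) (m + 2 - (m+1)) (by omega)) = ψB (el (m+3) 2 (by omega)) := by
          rw [← hbridge]
          congr 1
          unfold el
          congr 1
          exact Fin.ext he
        rw [he2, ← map_himp, himp_of_not_le htotB (by rw [el_le_el]; omega),
          hvC 0 (by omega)]
        calc ψB (el (m+3) 1 (by omega)) ≤ ψB (el (m+3) 2 (by omega)) :=
              hom_mono ψB (el_le_el.2 (by omega))
          _ = ψC (el (m+3) 1 (by omega)) := hbridge.symm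
          _ ≤ ψC (el (m+3) (m + 2 - 0) (by omega)) := hom_mono ψC (el_le_el.2 (by omega))
      · -- i = m + 2 : bottom step
        have hieq : i = m + 2 := by omega
        subst hieq
        rw [hvB, hvbot, ← map_bot ψB, ← map_himp,
          himp_of_not_le htotB (by rw [el_bot (m+3), el_le_el]; omega), map_bot]
        exact bot_le
  have heq : heval v (chainTerm (m + 3)) = v 0 := heval_chainTerm_eq v _ hk
  have htopD : heval v (chainTerm (m + 3)) = ⊤ := by
    have := hD (chainTerm (m + 3)) .top
      (fun w => identity_in_total hlin (m + 3) (by omega) w) v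
    simpa [heval] using this
  have hC : ψC (el (m+3) (m + 2) (by omega)) = ψC ⊤ := by
    rw [map_top]
    rw [heq] at htopD
    rw [← htopD, hvC 0 (by omega)]
    exact rfl
  have hC2 := ψC_inj hC
  have : (m + 2 : ℕ) = m + 3 := by
    have := congrArg (fun x : ULift.{u3} (Fin (m+4)) => x.down.val) hC2
    simpa [el, el_top] using this
  omega

end ChainAP

/-- If `V` is the variety of Heyting algebras generated by a finite totally ordered
Heyting algebra with `n > 3` elements, then `V` does not have the amalgamation
property. -/
theorem chain_generated_heyting_variety_fails_AP
    (H : Type) [HeytingAlgebra H] [Fintype H]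
    (hlin : ∀ a b : H, a ≤ b ∨ b ≤ a) (hcard : 3 < Fintype.card H) :
    ¬ (∀ (A B C : HeytAlg),
        InVarietyOf H A → InVarietyOf H B → InVarietyOf H C →
        ∀ (φB : HeytingHom ↥A ↥B) (φC : HeytingHom ↥A ↥C),
          Function.Injective φB → Function.Injective φC →
          ∃ D : HeytAlg, InVarietyOf H D ∧
            ∃ (ψB : HeytingHom ↥B ↥D) (ψC : HeytingHom ↥C ↥D),
              Function.Injective ψB ∧ Function.Injective ψC ∧
              ∀ a : ↥A, ψB (φB a) = ψC (φC a)) :=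
  ChainAP.main H hlin hcard
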